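/- arXiv:1404.0576 — 4 statements merged into one kernel-verified Lean document; each statement's English description precedes it below -/
import Mathlib

section
/- Let I be a nonempty finite set of nodes and L a finite set of edges with endpoint maps pos, neg : L → I, pos(ℓ) ≠ neg(ℓ); let E_i and deg_i be as usual, and set d_{iℓ} = 1 if pos(ℓ) = i, d_{iℓ} = −1 if neg(ℓ) = i, and d_{iℓ} = 0 otherwise. Suppose given, for each edge ℓ: σ_ℓ > 0, φ_ℓ ∈ ℝ, vectors a_ℓ, c_ℓ ∈ ℝᵈ, and a continuous linear map A_ℓ : ℝᵈ → ℝᵈ; and for each node i: y_i ∈ ℝᵈ, r_i ≥ 0, κ_i ∈ (0,1), and s_i ∈ ℝ with σ_ℓ ≤ s_i for every ℓ ∈ E_i, such that −κ_i·r_i + 2·deg_i·s_i·‖y_i‖² ≤ 0. Define Δy_ℓ := y(pos ℓ) − y(neg ℓ), û_i := −Σ_{ℓ∈L} d_{iℓ}·a_ℓ, and κ := max_{i∈I} κ_i. Then Σ_{i∈I}(−r_i + ⟨û_i, y_i⟩) + Σ_{ℓ∈L} ⟨c_ℓ, Δy_ℓ⟩ + Σ_{ℓ∈L}( −(1/(2σ_ℓ))·(1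 + φ_ℓ²·‖A_ℓ‖²)·‖a_ℓ − c_ℓ‖² − φ_ℓ·⟨a_ℓ − c_ℓ, A_ℓ(Δy_ℓ)⟩ ) ≤ −(1 − κ)·Σ_{i∈I} r_i. -/
open RealInnerProductSpace

/-- Incidence matrix entries of the graph encoded by endpoint maps `pos`, `neg`. -/
def incidence {I L : Type*} [DecidableEq I] (pos neg : L → I) (i : I) (ℓ : L) : ℝ :=
  if pos ℓ = i then 1 else if neg ℓ = i then -1 else 0

private lemma young_aux (a b t : ℝ) (ht : 0 < t) :
    a * b ≤ 1 / (2 * t) * a ^ 2 + t / 2 * b ^ 2 := by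
  have h2t : (0:ℝ) < 2 * t := by linarith
  have key : 2 * t * (a * b) ≤ 2 * t * (1 / (2 * t) * a ^ 2 + t / 2 * b ^ 2) := by
    have heq : 2 * t * (1 / (2 * t) * a ^ 2 + t / 2 * b ^ 2) = a ^ 2 + t ^ 2 * b ^ 2 := by
      field_simp
    rw [heq]; nlinarith [sq_nonneg (a - t * b)]
  exact le_of_mul_le_mul_left key h2t

private lemma incidence_sum {I L : Type*} [Fintype I] [DecidableEq I]
    (pos neg : L → I) (ℓ : L) (h : pos ℓ ≠ neg ℓ) (f : I → ℝ) :
    ∑ i, incidence pos neg i ℓ * f i = f (pos ℓ) - f (neg ℓ) := by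
  have hsplit : ∀ i, incidence pos neg i ℓ * f i =
      (if pos ℓ = i then f i else 0) + (if neg ℓ = i then -f i else 0) := by
    intro i
    unfold incidence
    by_cases h1 : pos ℓ = i
    · have h2 : ¬ neg ℓ = i := fun h2 => h (h1.trans h2.symm)
      simp [h1, h2]
    · by_cases h2 : neg ℓ = i <;> simp [h1, h2]
  simp only [hsplit, Finset.sum_add_distrib, Finset.sum_ite_eq, Finset.mem_univ, if_true]
  ring

private lemma endpoint_sum {I L : Type*} [Fintype I] [DecidableEq I]
    (pos neg : L → I) (ℓ : L) (h : pos ℓ ≠ neg ℓ) (g : I → ℝ) :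
    ∑ i, (if pos ℓ = i ∨ neg ℓ = i then g i else 0) = g (pos ℓ) + g (neg ℓ) := by
  have hsplit : ∀ i, (if pos ℓ = i ∨ neg ℓ = i then g i else 0) =
      (if pos ℓ = i then g i else 0) + (if neg ℓ = i then g i else 0) := by
    intro i
    by_cases h1 : pos ℓ = i
    · have h2 : ¬ neg ℓ = i := fun h2 => h (h1.trans h2.symm)
      simp [h1, h2]
    · by_cases h2 : neg ℓ = i <;> simp [h1, h2]
  simp only [hsplit, Finset.sum_add_distrib, Finset.sum_ite_eq, Finset.mem_univ, if_true]

theorem stmt_2 {I L : Type*} [Fintype I] [Nonempty I] [Fintype L] [DecidableEq I]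
    (pos neg : L → I) (hpn : ∀ ℓ, pos ℓ ≠ neg ℓ)
    {d : ℕ}
    (σ : L → ℝ) (hσ : ∀ ℓ, 0 < σ ℓ)
    (φ : L → ℝ)
    (a c : L → EuclideanSpace ℝ (Fin d))
    (A : L → (EuclideanSpace ℝ (Fin d) →L[ℝ] EuclideanSpace ℝ (Fin d)))
    (y : I → EuclideanSpace ℝ (Fin d))
    (r : I → ℝ) (hr : ∀ i, 0 ≤ r i)
    (κ : I → ℝ) (hκ : ∀ i, κ i ∈ Set.Ioo (0 : ℝ) 1)
    (s : I → ℝ) (hσs : ∀ i ℓ, (pos ℓ = i ∨ neg ℓ = i) → σ ℓ ≤ s i)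
    (hdis : ∀ i, -κ i * r i +
      2 * ((Finset.univ.filter (fun ℓ => pos ℓ = i ∨ neg ℓ = i)).card : ℝ) * s i * ‖y i‖ ^ 2 ≤ 0) :
    ∑ i, (-r i + ⟪-∑ ℓ, incidence pos neg i ℓ • a ℓ, y i⟫) +
      ∑ ℓ, ⟪c ℓ, y (pos ℓ) - y (neg ℓ)⟫ +
      ∑ ℓ, (-(1 / (2 * σ ℓ)) * (1 + (φ ℓ) ^ 2 * ‖A ℓ‖ ^ 2) * ‖a ℓ - c ℓ‖ ^ 2
            - φ ℓ * ⟪a ℓ - c ℓ, A ℓ (y (pos ℓ) - y (neg ℓ))⟫) ≤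
      -(1 - Finset.univ.sup' Finset.univ_nonempty κ) * ∑ i, r i := by
  classical
  set κm := Finset.univ.sup' Finset.univ_nonempty κ with hκm
  -- Step A : the û-sum telescopes
  have hA : ∑ i, (-r i + ⟪-∑ ℓ, incidence pos neg i ℓ • a ℓ, y i⟫)
      = -∑ i, r i - ∑ ℓ, ⟪a ℓ, y (pos ℓ) - y (neg ℓ)⟫ := by
    have h1 : ∀ i, ⟪-∑ ℓ, incidence pos neg i ℓ • a ℓ, y i⟫
        = -∑ ℓ, incidence pos neg i ℓ * ⟪a ℓ, y i⟫ := by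
      intro i
      rw [inner_neg_left, sum_inner]
      congr 1
      exact Finset.sum_congr rfl fun ℓ _ => real_inner_smul_left _ _ _
    calc ∑ i, (-r i + ⟪-∑ ℓ, incidence pos neg i ℓ • a ℓ, y i⟫)
        = ∑ i, (-r i) + ∑ i, (-∑ ℓ, incidence pos neg i ℓ * ⟪a ℓ, y i⟫) := by
          rw [← Finset.sum_add_distrib]
          exact Finset.sum_congr rfl fun i _ => by rw [h1 i]
      _ = -∑ i, r i - ∑ i, ∑ ℓ, incidence pos neg i ℓ * ⟪a ℓ, y i⟫ := by
          rw [Finset.sum_neg_distrib, Finset.sum_neg_distrib]; ring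
      _ = -∑ i, r i - ∑ ℓ, ∑ i, incidence pos neg i ℓ * ⟪a ℓ, y i⟫ := by
          rw [Finset.sum_comm]
      _ = -∑ i, r i - ∑ ℓ, ⟪a ℓ, y (pos ℓ) - y (neg ℓ)⟫ := by
          congr 1
          exact Finset.sum_congr rfl fun ℓ _ => by
            rw [incidence_sum pos neg ℓ (hpn ℓ), inner_sub_right]
  -- Step B : per-edge bound
  have per_edge : ∀ ℓ : L,
      -⟪a ℓ, y (pos ℓ) - y (neg ℓ)⟫ + ⟪c ℓ, y (pos ℓ) - y (neg ℓ)⟫ +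
        (-(1 / (2 * σ ℓ)) * (1 + (φ ℓ) ^ 2 * ‖A ℓ‖ ^ 2) * ‖a ℓ - c ℓ‖ ^ 2
          - φ ℓ * ⟪a ℓ - c ℓ, A ℓ (y (pos ℓ) - y (neg ℓ))⟫)
      ≤ 2 * σ ℓ * (‖y (pos ℓ)‖ ^ 2 + ‖y (neg ℓ)‖ ^ 2) := by
    intro ℓ
    set Δ := y (pos ℓ) - y (neg ℓ) with hΔ
    set e := a ℓ - c ℓ with he
    have hcomb : -⟪a ℓ, Δ⟫ + ⟪c ℓ, Δ⟫ = -⟪e, Δ⟫ := by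
      rw [he, inner_sub_left]; ring
    have h1 : -⟪e, Δ⟫ ≤ ‖e‖ * ‖Δ‖ := by
      have := abs_real_inner_le_norm e Δ
      have := neg_abs_le ⟪e, Δ⟫
      linarith
    have h2 : -(φ ℓ * ⟪e, A ℓ Δ⟫) ≤ (|φ ℓ| * ‖A ℓ‖ * ‖e‖) * ‖Δ‖ := by
      have habs : |φ ℓ * ⟪e, A ℓ Δ⟫| ≤ |φ ℓ| * (‖e‖ * (‖A ℓ‖ * ‖Δ‖)) := by
        rw [abs_mul]
        refine mul_le_mul_of_nonneg_left ?_ (abs_nonneg _)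
        calc |⟪e, A ℓ Δ⟫| ≤ ‖e‖ * ‖A ℓ Δ‖ := abs_real_inner_le_norm _ _
          _ ≤ ‖e‖ * (‖A ℓ‖ * ‖Δ‖) :=
              mul_le_mul_of_nonneg_left ((A ℓ).le_opNorm Δ) (norm_nonneg _)
      have := neg_abs_le (φ ℓ * ⟪e, A ℓ Δ⟫)
      nlinarith [this, habs]
    have hy1 : ‖e‖ * ‖Δ‖ ≤ 1 / (2 * σ ℓ) * ‖e‖ ^ 2 + σ ℓ / 2 * ‖Δ‖ ^ 2 :=
      young_aux _ _ _ (hσ ℓ)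
    have hy2 : (|φ ℓ| * ‖A ℓ‖ * ‖e‖) * ‖Δ‖ ≤
        1 / (2 * σ ℓ) * ((φ ℓ) ^ 2 * ‖A ℓ‖ ^ 2 * ‖e‖ ^ 2) + σ ℓ / 2 * ‖Δ‖ ^ 2 := by
      have := young_aux (|φ ℓ| * ‖A ℓ‖ * ‖e‖) (‖Δ‖) (σ ℓ) (hσ ℓ)
      have hsq : (|φ ℓ| * ‖A ℓ‖ * ‖e‖) ^ 2 = (φ ℓ) ^ 2 * ‖A ℓ‖ ^ 2 * ‖e‖ ^ 2 := by
        rw [mul_pow, mul_pow, sq_abs]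
      rw [hsq] at this
      exact this
    have hV : ‖Δ‖ ≤ ‖y (pos ℓ)‖ + ‖y (neg ℓ)‖ := norm_sub_le _ _
    have hVsq : ‖Δ‖ ^ 2 ≤ 2 * (‖y (pos ℓ)‖ ^ 2 + ‖y (neg ℓ)‖ ^ 2) := by
      nlinarith [sq_nonneg (‖y (pos ℓ)‖ - ‖y (neg ℓ)‖), norm_nonneg Δ,
        norm_nonneg (y (pos ℓ)), norm_nonneg (y (neg ℓ))]
    have hSV : σ ℓ * ‖Δ‖ ^ 2 ≤ σ ℓ * (2 * (‖y (pos ℓ)‖ ^ 2 + ‖y (neg ℓ)‖ ^ 2)) :=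
      mul_le_mul_of_nonneg_left hVsq (hσ ℓ).le
    rw [hcomb]
    nlinarith [h1, h2, hy1, hy2, hSV]
  -- Step C : regroup the edge bound per node and use dissipation
  have hnode : ∑ ℓ, 2 * σ ℓ * (‖y (pos ℓ)‖ ^ 2 + ‖y (neg ℓ)‖ ^ 2) ≤ ∑ i, κ i * r i := by
    have h1 : ∀ ℓ : L, 2 * σ ℓ * (‖y (pos ℓ)‖ ^ 2 + ‖y (neg ℓ)‖ ^ 2)
        = ∑ i, (if pos ℓ = i ∨ neg ℓ = i then 2 * σ ℓ * ‖y i‖ ^ 2 else 0) := by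
      intro ℓ
      rw [endpoint_sum pos neg ℓ (hpn ℓ)]
      ring
    calc ∑ ℓ, 2 * σ ℓ * (‖y (pos ℓ)‖ ^ 2 + ‖y (neg ℓ)‖ ^ 2)
        = ∑ ℓ, ∑ i, (if pos ℓ = i ∨ neg ℓ = i then 2 * σ ℓ * ‖y i‖ ^ 2 else 0) :=
          Finset.sum_congr rfl fun ℓ _ => h1 ℓ
      _ = ∑ i, ∑ ℓ, (if pos ℓ = i ∨ neg ℓ = i then 2 * σ ℓ * ‖y i‖ ^ 2 else 0) :=
          Finset.sum_comm
      _ ≤ ∑ i, κ i * r i := by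
          refine Finset.sum_le_sum fun i _ => ?_
          rw [← Finset.sum_filter]
          have hle : ∑ ℓ ∈ Finset.univ.filter (fun ℓ => pos ℓ = i ∨ neg ℓ = i),
              2 * σ ℓ * ‖y i‖ ^ 2
              ≤ ∑ ℓ ∈ Finset.univ.filter (fun ℓ => pos ℓ = i ∨ neg ℓ = i),
              2 * s i * ‖y i‖ ^ 2 := by
            refine Finset.sum_le_sum fun ℓ hℓ => ?_
            have hmem := (Finset.mem_filter.mp hℓ).2
            have := hσs i ℓ hmem
            nlinarith [sq_nonneg (‖y i‖)]
          have hconst : ∑ ℓ ∈ Finset.univ.filter (fun ℓ => pos ℓ = i ∨ neg ℓ = i),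
              2 * s i * ‖y i‖ ^ 2
              = ((Finset.univ.filter (fun ℓ => pos ℓ = i ∨ neg ℓ = i)).card : ℝ)
                * (2 * s i * ‖y i‖ ^ 2) := by
            rw [Finset.sum_const, nsmul_eq_mul]
          have hd := hdis i
          calc ∑ ℓ ∈ Finset.univ.filter (fun ℓ => pos ℓ = i ∨ neg ℓ = i),
              2 * σ ℓ * ‖y i‖ ^ 2
              ≤ ((Finset.univ.filter (fun ℓ => pos ℓ = i ∨ neg ℓ = i)).card : ℝ)
                * (2 * s i * ‖y i‖ ^ 2) := by rw [← hconst]; exact hle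
            _ ≤ κ i * r i := by nlinarith [hd]
  -- Step D : bound by the max
  have hmax : ∑ i, κ i * r i ≤ κm * ∑ i, r i := by
    rw [Finset.mul_sum]
    exact Finset.sum_le_sum fun i _ =>
      mul_le_mul_of_nonneg_right (Finset.le_sup' κ (Finset.mem_univ i)) (hr i)
  -- assemble
  have hsum : -∑ ℓ, ⟪a ℓ, y (pos ℓ) - y (neg ℓ)⟫ + ∑ ℓ, ⟪c ℓ, y (pos ℓ) - y (neg ℓ)⟫ +
      ∑ ℓ, (-(1 / (2 * σ ℓ)) * (1 + (φ ℓ) ^ 2 * ‖A ℓ‖ ^ 2) * ‖a ℓ - c ℓ‖ ^ 2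
            - φ ℓ * ⟪a ℓ - c ℓ, A ℓ (y (pos ℓ) - y (neg ℓ))⟫)
      ≤ ∑ ℓ, 2 * σ ℓ * (‖y (pos ℓ)‖ ^ 2 + ‖y (neg ℓ)‖ ^ 2) := by
    rw [← Finset.sum_neg_distrib, ← Finset.sum_add_distrib, ← Finset.sum_add_distrib]
    exact Finset.sum_le_sum fun ℓ _ => per_edge ℓ
  rw [hA]
  have hring : -(1 - κm) * ∑ i, r i = -∑ i, r i + κm * ∑ i, r i := by ring
  linarith [hsum, hnode, hmax]
end

section
/- Let K > 0, σ > 0, and 0 ≤ a < b. Define T := (σ/K)·(arctan(K·b) − arctan(K·a)). Then 0 < T < (σ/K)·(π/2), and for any function θ : ℝ → ℝ that is differentiable on [0, T] with θ(0) = b and θ′(t) = −(1/σ)·(1 + K²·θ(t)²) for all t ∈ [0, T], one has θ(T) = a. -/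
theorem stmt_7 (K σ a b : ℝ) (hK : 0 < K) (hσ : 0 < σ) (ha : 0 ≤ a) (hab : a < b)
    (T : ℝ) (hT : T = (σ / K) * (Real.arctan (K * b) - Real.arctan (K * a))) :
    0 < T ∧ T < (σ / K) * (Real.pi / 2) ∧
      ∀ θ : ℝ → ℝ, θ 0 = b →
        (∀ t ∈ Set.Icc (0 : ℝ) T,
          HasDerivAt θ (-(1 / σ) * (1 + K ^ 2 * (θ t) ^ 2)) t) →
        θ T = a := by
  have hσK : 0 < σ / K := div_pos hσ hK
  have harc : Real.arctan (K * a) < Real.arctan (K * b) :=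
    Real.arctan_strictMono (by nlinarith)
  have hT0 : 0 < T := by rw [hT]; exact mul_pos hσK (by linarith)
  refine ⟨hT0, ?_, ?_⟩
  · rw [hT]
    apply mul_lt_mul_of_pos_left _ hσK
    have h1 : Real.arctan (K * b) < Real.pi / 2 := Real.arctan_lt_pi_div_two _
    have h2 : 0 ≤ Real.arctan (K * a) := by
      rw [← Real.arctan_zero]
      exact Real.arctan_strictMono.monotone (by positivity)
    linarith
  · intro θ hθ0 hderiv
    set h : ℝ → ℝ := fun t => Real.arctan (K * θ t) + K / σ * t with hh
    have hderivh : ∀ t ∈ Set.Icc (0:ℝ) T, HasDerivAt h 0 t := by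
      intro t ht
      have hd := hderiv t ht
      have hKd : HasDerivAt (fun t => K * θ t)
          (K * (-(1 / σ) * (1 + K ^ 2 * (θ t) ^ 2))) t := hd.const_mul K
      have harc' := (Real.hasDerivAt_arctan (K * θ t)).comp t hKd
      have hlin : HasDerivAt (fun t => K / σ * t) (K / σ) t := by
        simpa using (hasDerivAt_id t).const_mul (K / σ)
      have := harc'.add hlin
      refine this.congr_deriv ?_
      have hpos : (0:ℝ) < 1 + K ^ 2 * (θ t) ^ 2 := by positivity
      field_simp
      ring
    have hcont : ContinuousOn h (Set.Icc 0 T) := fun t ht =>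
      ((hderivh t ht).continuousAt).continuousWithinAt
    have hconst : h T = h 0 := by
      have := constant_of_has_deriv_right_zero hcont
        (fun t ht => ((hderivh t (Set.mem_Icc_of_Ico ht)).hasDerivWithinAt))
      exact this T (Set.right_mem_Icc.2 hT0.le)
    have hKσ : K / σ * T = Real.arctan (K * b) - Real.arctan (K * a) := by
      rw [hT]; field_simp
    have heq : Real.arctan (K * θ T) = Real.arctan (K * a) := by
      have : Real.arctan (K * θ T) + K / σ * T = Real.arctan (K * b) := by
        simpa [hh, hθ0] using hconst
      linarith [hKσ ▸ this]
    have := mul_left_cancel₀ hK.ne' (Real.arctan_injective heq)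
    exact this
end

section
/- Let K > 0, σ > 0, a, b ∈ ℝ, τ ≥ 0, and let φ : ℝ → ℝ be differentiable on [0, τ] with φ(0) = b, φ(τ) = a, and φ′(t) ≥ −(1/σ)·(1 + K²·φ(t)²) for all t ∈ [0, τ]. Then τ ≥ (σ/K)·(arctan(K·b) − arctan(K·a)). -/
theorem stmt_8 (K σ a b τ : ℝ) (hK : 0 < K) (hσ : 0 < σ) (hτ : 0 ≤ τ)
    (φ φ' : ℝ → ℝ) (hφ0 : φ 0 = b) (hφτ : φ τ = a)
    (hφ : ∀ t ∈ Set.Icc (0 : ℝ) τ, HasDerivAt φ (φ' t) t)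
    (hφ' : ∀ t ∈ Set.Icc (0 : ℝ) τ, φ' t ≥ -(1 / σ) * (1 + K ^ 2 * (φ t) ^ 2)) :
    τ ≥ (σ / K) * (Real.arctan (K * b) - Real.arctan (K * a)) := by
  set g : ℝ → ℝ := fun t => (σ / K) * Real.arctan (K * φ t) + t with hg
  have hgd : ∀ t ∈ Set.Icc (0 : ℝ) τ,
      HasDerivAt g ((σ / K) * (1 / (1 + (K * φ t) ^ 2) * (K * φ' t)) + 1) t := by
    intro t ht
    have h1 : HasDerivAt (fun t => K * φ t) (K * φ' t) t := (hφ t ht).const_mul K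
    have h2 := (Real.hasDerivAt_arctan (K * φ t)).comp t h1
    exact ((h2.const_mul (σ / K)).add (hasDerivAt_id t))
  have hnonneg : ∀ t ∈ Set.Icc (0 : ℝ) τ,
      0 ≤ (σ / K) * (1 / (1 + (K * φ t) ^ 2) * (K * φ' t)) + 1 := by
    intro t ht
    have h := hφ' t ht
    have hden : 0 < 1 + (K * φ t) ^ 2 := by positivity
    have key : -(1 + (K * φ t) ^ 2) ≤ σ * φ' t := by
      have h2 := mul_le_mul_of_nonneg_left (ge_iff_le.mp h) hσ.le
      have h3 : σ * (-(1 / σ) * (1 + K ^ 2 * φ t ^ 2)) = -(1 + K ^ 2 * φ t ^ 2) := by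
        field_simp
      have hex : (K * φ t) ^ 2 = K ^ 2 * φ t ^ 2 := by ring
      rw [hex]; linarith
    have hE : (σ / K) * (1 / (1 + (K * φ t) ^ 2) * (K * φ' t))
        = σ * φ' t / (1 + (K * φ t) ^ 2) := by
      field_simp
    rw [hE]
    have : (-1 : ℝ) ≤ σ * φ' t / (1 + (K * φ t) ^ 2) := by
      rw [le_div_iff₀ hden]; linarith
    linarith
  have hmono : MonotoneOn g (Set.Icc 0 τ) := by
    apply monotoneOn_of_deriv_nonneg (convex_Icc 0 τ)
    · exact ContinuousOn.congr (continuousOn_of_forall_continuousAt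
        (fun t ht => (hgd t ht).continuousAt)) (fun x hx => rfl)
    · intro t ht
      rw [interior_Icc] at ht
      exact (hgd t (Set.mem_Icc_of_Ioo ht)).differentiableAt.differentiableWithinAt
    · intro t ht
      rw [interior_Icc] at ht
      rw [(hgd t (Set.mem_Icc_of_Ioo ht)).deriv]
      exact hnonneg t (Set.mem_Icc_of_Ioo ht)
  have h0τ : g 0 ≤ g τ := hmono (Set.left_mem_Icc.mpr hτ) (Set.right_mem_Icc.mpr hτ) hτ
  simp only [hg, hφ0, hφτ] at h0τ
  have hKσ : 0 < σ / K := by positivity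
  nlinarith [h0τ]
end

section
/- Let c > 0 and φ : ℝⁿ → ℝⁿ continuous satisfy the strong monotonicity condition ⟨v − v′, φ(v′) − φ(v)⟩ ≥ c·‖v − v′‖² for all v, v′ ∈ ℝⁿ. Let t₀ ≤ t₁, ū ≥ 0, let u, w : [t₀, t₁] → ℝⁿ be continuous with ‖u(t) − w(t)‖ ≤ ū for all t ∈ [t₀, t₁], and let x, y : ℝ → ℝⁿ be differentiable on [t₀, t₁] with x′(t) = φ(x(t)) + u(t) and y′(t) = φ(y(t)) + w(t) for all t ∈ [t₀, t₁]. Then for every t ∈ [t₀, t₁]: ‖x(t) − y(t)‖² ≤ exp(−c·(t − t₀))·‖x(t₀) − y(t₀)‖² + (ū²/c²)·(1 − exp(−c·(t − t₀))). -/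
open RealInnerProductSpace

theorem stmt_15 {n : ℕ} (c : ℝ) (hc : 0 < c)
    (φ : EuclideanSpace ℝ (Fin n) → EuclideanSpace ℝ (Fin n)) (hφcont : Continuous φ)
    (hmono : ∀ v v' : EuclideanSpace ℝ (Fin n), ⟪v - v', φ v' - φ v⟫ ≥ c * ‖v - v'‖ ^ 2)
    (t₀ t₁ : ℝ) (ht : t₀ ≤ t₁) (ubar : ℝ) (hubar : 0 ≤ ubar)
    (u w : ℝ → EuclideanSpace ℝ (Fin n))
    (hu : ContinuousOn u (Set.Icc t₀ t₁)) (hw : ContinuousOn w (Set.Icc t₀ t₁))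
    (huw : ∀ t ∈ Set.Icc t₀ t₁, ‖u t - w t‖ ≤ ubar)
    (x y : ℝ → EuclideanSpace ℝ (Fin n))
    (hx : ∀ t ∈ Set.Icc t₀ t₁, HasDerivAt x (φ (x t) + u t) t)
    (hy : ∀ t ∈ Set.Icc t₀ t₁, HasDerivAt y (φ (y t) + w t) t) :
    ∀ t ∈ Set.Icc t₀ t₁,
      ‖x t - y t‖ ^ 2 ≤ Real.exp (-c * (t - t₀)) * ‖x t₀ - y t₀‖ ^ 2 +
        (ubar ^ 2 / c ^ 2) * (1 - Real.exp (-c * (t - t₀))) := by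
  set g : ℝ → EuclideanSpace ℝ (Fin n) := fun t => x t - y t with hg
  set g' : ℝ → EuclideanSpace ℝ (Fin n) :=
    fun t => (φ (x t) + u t) - (φ (y t) + w t) with hg'
  have hgd : ∀ t ∈ Set.Icc t₀ t₁, HasDerivAt g (g' t) t := fun t htm =>
    (hx t htm).sub (hy t htm)
  set f : ℝ → ℝ := fun t => ‖g t‖ ^ 2 with hf
  set f' : ℝ → ℝ := fun t => 2 * ⟪g t, g' t⟫ with hfp
  have hfd : ∀ t ∈ Set.Icc t₀ t₁, HasDerivAt f (f' t) t := by
    intro t htm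
    have h := (hgd t htm).inner ℝ (hgd t htm)
    have : HasDerivAt (fun s => ⟪g s, g s⟫) (2 * ⟪g t, g' t⟫) t := by
      exact h.congr_deriv (by rw [real_inner_comm (g' t) (g t)]; ring)
    have heq : (fun s => ⟪g s, g s⟫) = f := by
      funext s; rw [hf, real_inner_self_eq_norm_sq]
    rwa [heq] at this
  have bound : ∀ t ∈ Set.Ico t₀ t₁, f' t ≤ (-c) * f t + ubar ^ 2 / c := by
    intro t htm
    have htm' : t ∈ Set.Icc t₀ t₁ := Set.mem_Icc_of_Ico htm
    have h1 : ⟪g t, φ (x t) - φ (y t)⟫ ≤ -(c * ‖g t‖ ^ 2) := by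
      have := hmono (x t) (y t)
      have h2 := neg_le_neg this
      calc ⟪g t, φ (x t) - φ (y t)⟫
          = -⟪x t - y t, φ (y t) - φ (x t)⟫ := by
            rw [← inner_neg_right]; congr 1; abel
        _ ≤ -(c * ‖x t - y t‖ ^ 2) := neg_le_neg this
        _ = -(c * ‖g t‖ ^ 2) := rfl
    have h2 : ⟪g t, u t - w t⟫ ≤ ‖g t‖ * ubar := by
      calc ⟪g t, u t - w t⟫ ≤ ‖g t‖ * ‖u t - w t‖ := real_inner_le_norm _ _
        _ ≤ ‖g t‖ * ubar := by
            exact mul_le_mul_of_nonneg_left (huw t htm') (norm_nonneg _)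
    have hyoung : 2 * (‖g t‖ * ubar) ≤ c * ‖g t‖ ^ 2 + ubar ^ 2 / c := by
      have hdiv : ubar ^ 2 / c * c = ubar ^ 2 := div_mul_cancel₀ _ hc.ne'
      nlinarith [sq_nonneg (c * ‖g t‖ - ubar), hc, sq_nonneg (‖g t‖),
        div_nonneg (sq_nonneg ubar) hc.le]
    have hdecomp : g' t = (φ (x t) - φ (y t)) + (u t - w t) := by
      rw [hg']; abel
    have : f' t = 2 * ⟪g t, φ (x t) - φ (y t)⟫ + 2 * ⟪g t, u t - w t⟫ := by
      rw [hfp]; simp only [hdecomp, inner_add_right]; ring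
    rw [this]
    have : f t = ‖g t‖ ^ 2 := rfl
    nlinarith
  have hcont : ContinuousOn f (Set.Icc t₀ t₁) := fun t htm =>
    ((hfd t htm).continuousAt).continuousWithinAt
  have hgron := le_gronwallBound_of_liminf_deriv_right_le hcont
    (fun s hs _r hr =>
      ((hfd s (Set.mem_Icc_of_Ico hs)).hasDerivWithinAt.liminf_right_slope_le hr))
    (le_refl (f t₀)) bound
  intro t htm
  have := hgron t htm
  rw [gronwallBound_of_K_ne_0 (by linarith : (-c) ≠ 0)] at this
  have hrw : ubar ^ 2 / c / (-c) * (Real.exp (-c * (t - t₀)) - 1)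
      = ubar ^ 2 / c ^ 2 * (1 - Real.exp (-c * (t - t₀))) := by
    field_simp; ring
  calc ‖x t - y t‖ ^ 2 = f t := rfl
    _ ≤ f t₀ * Real.exp (-c * (t - t₀)) + ubar ^ 2 / c / (-c) * (Real.exp (-c * (t - t₀)) - 1) := this
    _ = Real.exp (-c * (t - t₀)) * ‖x t₀ - y t₀‖ ^ 2 +
        ubar ^ 2 / c ^ 2 * (1 - Real.exp (-c * (t - t₀))) := by
        rw [hrw]; simp only [hf]; ring
end
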